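/- Let (Z_i)_{i=1}^n be a martingale difference sequence adapted to a filtration (ℱ_i), i.e., E[Z_i | ℱ_{i−1}] = 0 for all i, with |Z_i| ≤ K almost surely. Define M_n := Σ_{i=1}^n Z_i and V_n := Σ_{i=1}^n E[Z_i² | ℱ_{i−1}]. Then for any n ≥ 96 and δ ∈ (0,1), with probability at least 1 − δ, |M_n| ≤ 2·√( V_n·ln(n/δ) ) + 3·K·ln(n/δ). -/

import Mathlib

open MeasureTheory ProbabilityTheory Filter

theorem exp_quad_aux {x : ℝ} (hx : |x| ≤ 1/2) : Real.exp x ≤ 1 + x + (5/8)*x^2 := by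
  have h1 : |x| ≤ 1 := hx.trans (by norm_num)
  have h := Real.exp_bound h1 (n := 4) (by norm_num)
  have hs : ∑ m ∈ Finset.range 4, x ^ m / m.factorial = 1 + x + x^2/2 + x^3/6 := by
    simp [Finset.sum_range_succ, Nat.factorial]
  rw [hs] at h
  have h2 := (abs_sub_le_iff.1 h).1
  have h4 : |x| ^ 4 = x ^ 4 := by
    rw [pow_abs]; exact abs_of_nonneg (by positivity)
  rw [h4] at h2
  norm_num [Nat.factorial] at h2
  have hxsq : x^2 ≤ 1/4 := by nlinarith [abs_nonneg x, sq_abs x]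
  have h3 : x^3 ≤ (1/2)*x^2 := by nlinarith [abs_nonneg x, sq_abs x, neg_abs_le x, le_abs_self x]
  have h5 : x^4 ≤ (1/4)*x^2 := by nlinarith [sq_nonneg x]
  nlinarith [sq_nonneg x]

theorem bucket0_aux {K L v : ℝ} (hK : 0 < K) (hL : 0 ≤ L) (hv : v ≤ 2*K^2*L) :
    (5/8)*(1/(2*K))*v + L/(1/(2*K)) ≤ 3*K*L := by
  have h58 : (5/8)*(1/(2*K))*v ≤ (5/8)*(1/(2*K))*(2*K^2*L) :=
    mul_le_mul_of_nonneg_left hv (by positivity)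
  have e1 : (5/8)*(1/(2*K))*(2*K^2*L) = (5/8)*(K*L) := by field_simp
  have e2 : L/(1/(2*K)) = 2*(K*L) := by field_simp
  nlinarith [mul_nonneg hK.le hL]

theorem bucketj_aux {lam L v : ℝ} (hlam : 0 < lam) (hL : 0 < L)
    (h1 : (2/5)*(L/lam^2) ≤ v) (h2 : v ≤ (8/5)*(L/lam^2)) :
    (5/8)*lam*v + L/lam ≤ 2*Real.sqrt (v*L) := by
  have h4 : Real.sqrt (4*(v*L)) = 2*Real.sqrt (v*L) := by
    rw [show (4:ℝ)*(v*L) = 2^2*(v*L) by ring]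
    rw [Real.sqrt_mul (by norm_num : (0:ℝ) ≤ 2^2) (v*L), Real.sqrt_sq (by norm_num : (0:ℝ) ≤ 2)]
  rw [← h4]
  apply Real.le_sqrt_of_sq_le
  set u := lam^2*v with hu
  have hu1 : (2/5)*L ≤ u := by
    have := mul_le_mul_of_nonneg_left h1 (sq_nonneg lam)
    calc (2/5)*L = lam^2*((2/5)*(L/lam^2)) := by field_simp
    _ ≤ u := this
  have hu2 : u ≤ (8/5)*L := by
    have := mul_le_mul_of_nonneg_left h2 (sq_nonneg lam)
    calc u ≤ lam^2*((8/5)*(L/lam^2)) := this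
    _ = (8/5)*L := by field_simp
  have hexp : ((5/8)*lam*v + L/lam)^2 * lam^2 = (25/64)*u^2 + (5/4)*u*L + L^2 := by
    field_simp
    ring
  have hprod : (u - (2/5)*L)*(u - (8/5)*L) ≤ 0 :=
    mul_nonpos_of_nonneg_of_nonpos (by linarith) (by linarith)
  have hq : (25/64)*u^2 + (5/4)*u*L + L^2 ≤ 4*(v*L)*lam^2 := by
    have h4u : 4*(v*L)*lam^2 = 4*u*L := by rw [hu]; ring
    rw [h4u]
    nlinarith [hprod, mul_le_mul_of_nonneg_right hu1 hL.le]
  have := hexp.trans_le hq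
  exact le_of_mul_le_mul_right this (pow_pos hlam 2)

theorem two_pow_aux' : ∀ l : ℕ, 4 ≤ l → 2*l+2 ≤ 2^l := by
  intro l hl
  induction l with
  | zero => omega
  | succ k ih =>
    rcases Nat.lt_or_ge k 4 with h | h
    · interval_cases k <;> simp_all
    · have := ih (by omega)
      have h2 : 2^k ≥ 1 := Nat.one_le_two_pow
      rw [pow_succ]; omega

theorem count_aux' {n : ℕ} (hn : 96 ≤ n) : 2*(Nat.log 4 n) + 2 ≤ n := by
  set l := Nat.log 4 n with hl
  rcases Nat.lt_or_ge l 47 with h | h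
  · omega
  · have h4 : 4^l ≤ n := Nat.pow_log_le_self 4 (by omega)
    have h2 : 2^l ≤ 4^l := Nat.pow_le_pow_left (by norm_num) l
    have := two_pow_aux' l (by omega)
    omega

theorem exp_half_le_two : Real.exp (1/2) ≤ 2 := by
  nlinarith [Real.exp_pos (1/2:ℝ), Real.exp_one_lt_d9,
    show Real.exp (1/2) * Real.exp (1/2) = Real.exp 1 by rw [← Real.exp_add]; norm_num]

set_option maxHeartbeats 2000000 in
/-- Bernstein-type inequality for bounded martingale difference sequences
(Corollary `bim` of the paper). -/
theorem stmt_15 {Ω : Type*} {m0 : MeasurableSpace Ω} (μ : Measure Ω)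
    [IsProbabilityMeasure μ] (ℱ : Filtration ℕ m0)
    (n : ℕ) (hn : 96 ≤ n) (K : ℝ) (Z : ℕ → Ω → ℝ)
    (hadp : ∀ i ∈ Finset.Icc 1 n, StronglyMeasurable[ℱ i] (Z i))
    (hint : ∀ i ∈ Finset.Icc 1 n, Integrable (Z i) μ)
    (hbdd : ∀ i ∈ Finset.Icc 1 n, ∀ᵐ ω ∂μ, |Z i ω| ≤ K)
    (hmds : ∀ i ∈ Finset.Icc 1 n, μ[Z i | ℱ (i - 1)] =ᵐ[μ] (0 : Ω → ℝ))
    (δ : ℝ) (hδ : δ ∈ Set.Ioo (0 : ℝ) 1) :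
    ENNReal.ofReal (1 - δ) ≤
      μ {ω | |∑ i ∈ Finset.Icc 1 n, Z i ω|
          ≤ 2 * Real.sqrt
                ((∑ i ∈ Finset.Icc 1 n, (μ[fun ω' => (Z i ω') ^ 2 | ℱ (i - 1)]) ω)
                  * Real.log (n / δ))
            + 3 * K * Real.log (n / δ)} := by
  obtain ⟨hδ0, hδ1⟩ := hδ
  have hμae : (ae μ).NeBot := ae_neBot.2 (IsProbabilityMeasure.ne_zero μ)
  have hn1 : (1:ℕ) ∈ Finset.Icc 1 n := by simp; omega
  have hK0 : 0 ≤ K := by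
    obtain ⟨ω, hω⟩ := (hbdd 1 hn1).exists
    exact le_trans (abs_nonneg _) hω
  set L := Real.log (↑n / δ) with hLdef
  set sig : ℕ → Ω → ℝ := fun i => μ[fun ω' => (Z i ω') ^ 2 | ℱ (i - 1)] with hsigdef
  set S : Set Ω := {ω | |∑ i ∈ Finset.Icc 1 n, Z i ω|
          ≤ 2 * Real.sqrt ((∑ i ∈ Finset.Icc 1 n, sig i ω) * L) + 3 * K * L} with hSdef
  have hncast : (96:ℝ) ≤ (n:ℝ) := by exact_mod_cast hn
  have hnpos : (0:ℝ) < n := by linarith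
  have hndpos : (0:ℝ) < ↑n / δ := by positivity
  have hnd96 : (96:ℝ) ≤ ↑n / δ := by
    rw [le_div_iff₀ hδ0]; nlinarith
  have hL2 : 2 ≤ L := by
    rw [hLdef, Real.le_log_iff_exp_le hndpos, show (2:ℝ) = 1+1 by norm_num, Real.exp_add]
    nlinarith [Real.exp_one_lt_d9, Real.exp_pos 1]
  have hL0 : (0:ℝ) < L := by linarith
  -- basic integrability
  have hZ2int : ∀ i ∈ Finset.Icc 1 n, Integrable (fun ω => (Z i ω)^2) μ := by
    intro i hi
    have hm := ((hadp i hi).mono (ℱ.le i))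
    refine Integrable.mono' (integrable_const (K^2)) ?_ ?_
    · exact (hm.mul hm).aestronglyMeasurable.congr
        (Eventually.of_forall fun ω => by simp [sq])
    · exact (hbdd i hi).mono fun ω h => by
        rw [Real.norm_eq_abs, abs_pow]
        exact pow_le_pow_left₀ (abs_nonneg _) h 2
  -- nonnegativity and upper bound of conditional variances
  have hsig_nn : ∀ i ∈ Finset.Icc 1 n, 0 ≤ᵐ[μ] sig i := fun i hi =>
    condExp_nonneg (Eventually.of_forall fun ω => sq_nonneg _)
  have hsig_le : ∀ i ∈ Finset.Icc 1 n, sig i ≤ᵐ[μ] fun _ => K^2 := by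
    intro i hi
    have h := condExp_mono (m := ℱ (i-1)) (μ := μ) (hZ2int i hi) (integrable_const (K^2))
      ((hbdd i hi).mono fun ω h => by
        calc (Z i ω)^2 = |Z i ω|^2 := (sq_abs _).symm
        _ ≤ K^2 := pow_le_pow_left₀ (abs_nonneg _) h 2)
    rwa [condExp_const (ℱ.le (i-1))] at h
  rcases eq_or_lt_of_le hK0 with hKeq | hKpos
  · -- degenerate case K = 0
    have hS1 : ∀ᵐ ω ∂μ, ω ∈ S := by
      have hz : ∀ᵐ ω ∂μ, ∀ i ∈ (↑(Finset.Icc 1 n) : Set ℕ), Z i ω = 0 ∧ sig i ω = 0 := by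
        rw [ae_ball_iff (Finset.Icc 1 n).countable_toSet]
        intro i hi'
        have hi : i ∈ Finset.Icc 1 n := hi'
        have hZ0 : Z i =ᵐ[μ] 0 := (hbdd i hi).mono fun ω h => by
          have : |Z i ω| ≤ 0 := by rw [hKeq]; exact h
          simpa [abs_nonpos_iff] using this
        have hs0 : sig i =ᵐ[μ] 0 := by
          have : (fun ω' => (Z i ω')^2) =ᵐ[μ] (0 : Ω → ℝ) := hZ0.mono fun ω h => by
            simp only [Pi.zero_apply] at h ⊢; simp [h]
          calc sig i =ᵐ[μ] μ[(0:Ω → ℝ)|ℱ (i-1)] := condExp_congr_ae this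
          _ = 0 := condExp_zero
          _ =ᵐ[μ] 0 := EventuallyEq.rfl
        exact hZ0.and hs0
      filter_upwards [hz] with ω hω
      have hM : ∑ i ∈ Finset.Icc 1 n, Z i ω = 0 :=
        Finset.sum_eq_zero fun i hi => (hω i hi).1
      have hV : ∑ i ∈ Finset.Icc 1 n, sig i ω = 0 :=
        Finset.sum_eq_zero fun i hi => (hω i hi).2
      simp only [hSdef, Set.mem_setOf_eq, hM, hV, abs_zero, ← hKeq]
      positivity
    have h1 : (1:ENNReal) ≤ μ S := by
      calc (1:ENNReal) = μ Set.univ := measure_univ.symm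
      _ ≤ μ S := measure_mono_ae (hS1.mono fun ω hω => fun _ => hω)
    calc ENNReal.ofReal (1-δ) ≤ 1 := ENNReal.ofReal_le_one.2 (by linarith)
    _ ≤ μ S := h1
  · -- main case 0 < K
    -- Step 1: conditional mgf bound
    have hstep : ∀ i ∈ Finset.Icc 1 n, ∀ lam : ℝ, |lam| * K ≤ 1/2 →
        μ[fun ω => Real.exp (lam * Z i ω) | ℱ (i-1)] ≤ᵐ[μ]
          fun ω => Real.exp ((5/8)*lam^2 * sig i ω) := by
      intro i hi lam hlam
      have hmeas_i := (hadp i hi).mono (ℱ.le i)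
      have habs : ∀ᵐ ω ∂μ, |lam * Z i ω| ≤ 1/2 := (hbdd i hi).mono fun ω h => by
        rw [abs_mul]
        calc |lam| * |Z i ω| ≤ |lam| * K := mul_le_mul_of_nonneg_left h (abs_nonneg _)
        _ ≤ 1/2 := hlam
      have hexp_int : Integrable (fun ω => Real.exp (lam * Z i ω)) μ := by
        refine Integrable.mono' (integrable_const (Real.exp (1/2))) ?_ ?_
        · exact (Real.continuous_exp.comp_stronglyMeasurable
            (hmeas_i.const_mul lam)).aestronglyMeasurable
        · filter_upwards [habs] with ω h
          rw [Real.norm_eq_abs, abs_of_pos (Real.exp_pos _)]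
          exact Real.exp_le_exp.2 (le_trans (le_abs_self _) h)
      have hg_int : Integrable ((fun _ => (1:ℝ)) + lam • Z i
          + ((5/8)*lam^2) • (fun ω => (Z i ω)^2)) μ :=
        ((integrable_const (1:ℝ)).add ((hint i hi).smul lam)).add ((hZ2int i hi).smul ((5/8)*lam^2))
      have hpt : (fun ω => Real.exp (lam * Z i ω)) ≤ᵐ[μ]
          ((fun _ => (1:ℝ)) + lam • Z i + ((5/8)*lam^2) • (fun ω => (Z i ω)^2)) := by
        filter_upwards [habs] with ω h
        have h1 := exp_quad_aux h
        simp only [Pi.add_apply, Pi.smul_apply, smul_eq_mul]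
        calc Real.exp (lam * Z i ω) ≤ 1 + lam * Z i ω + (5/8)*(lam * Z i ω)^2 := h1
        _ = 1 + lam * Z i ω + (5/8)*lam^2*(Z i ω)^2 := by ring
      have h1 := condExp_mono (m := ℱ (i-1)) hexp_int hg_int hpt
      have c1 := condExp_add (m := ℱ (i-1)) (μ := μ)
        ((integrable_const (1:ℝ)).add ((hint i hi).smul lam)) ((hZ2int i hi).smul ((5/8)*lam^2))
      have c2 := condExp_add (m := ℱ (i-1)) (μ := μ) (integrable_const (1:ℝ)) ((hint i hi).smul lam)
      have c3 := condExp_smul (m := ℱ (i-1)) (μ := μ) lam (Z i)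
      have c4 := condExp_smul (m := ℱ (i-1)) (μ := μ) ((5/8)*lam^2) (fun ω => (Z i ω)^2)
      have c5 : μ[(fun _ => (1:ℝ))|ℱ (i-1)] = fun _ => (1:ℝ) := condExp_const (ℱ.le (i-1)) 1
      refine h1.trans ?_
      have hsig_i : μ[fun ω' => (Z i ω')^2|ℱ (i-1)] = sig i := by rw [hsigdef]
      filter_upwards [c1, c2, c3, c4, hmds i hi] with ω e1 e2 e3 e4 e5
      rw [e1]
      simp only [Pi.add_apply, Pi.smul_apply, smul_eq_mul, Pi.zero_apply] at e2 e3 e4 e5 ⊢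
      rw [e2, e3, e4, e5, congrFun c5 ω, hsig_i]
      have := Real.add_one_le_exp ((5/8)*lam^2 * sig i ω)
      linarith
    -- Step 2: supermartingale bound on the product
    have prodfacts : ∀ lam : ℝ, |lam| * K ≤ 1/2 →
        Integrable (fun ω => ∏ i ∈ Finset.Icc 1 n,
            Real.exp (lam * Z i ω - (5/8)*lam^2 * sig i ω)) μ ∧
        (∫ ω, (∏ i ∈ Finset.Icc 1 n,
            Real.exp (lam * Z i ω - (5/8)*lam^2 * sig i ω)) ∂μ) ≤ 1 := by
      intro lam hlam
      have hfac_meas : ∀ k, k ≤ n → StronglyMeasurable[ℱ k]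
          (fun ω => ∏ i ∈ Finset.Icc 1 k, Real.exp (lam * Z i ω - (5/8)*lam^2 * sig i ω)) := by
        intro k hk
        apply Finset.stronglyMeasurable_fun_prod
        intro i hi
        rw [Finset.mem_Icc] at hi
        have hiN : i ∈ Finset.Icc 1 n := by rw [Finset.mem_Icc]; omega
        have hZm : StronglyMeasurable[ℱ k] (Z i) := (hadp i hiN).mono (ℱ.mono hi.2)
        have hsm : StronglyMeasurable[ℱ k] (sig i) := by
          rw [hsigdef]; exact stronglyMeasurable_condExp.mono (ℱ.mono (by omega))
        exact Real.continuous_exp.comp_stronglyMeasurable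
          ((hZm.const_mul lam).sub (hsm.const_mul _))
      have hae_all : ∀ᵐ ω ∂μ, ∀ i ∈ (↑(Finset.Icc 1 n) : Set ℕ), |Z i ω| ≤ K ∧ 0 ≤ sig i ω := by
        rw [ae_ball_iff (Finset.Icc 1 n).countable_toSet]
        intro i hi
        exact (hbdd i hi).and (hsig_nn i hi)
      have hfac_bdd : ∀ k, k ≤ n → ∀ᵐ ω ∂μ,
          (∏ i ∈ Finset.Icc 1 k, Real.exp (lam * Z i ω - (5/8)*lam^2 * sig i ω)) ≤ 2^k := by
        intro k hk
        filter_upwards [hae_all] with ω hω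
        calc ∏ i ∈ Finset.Icc 1 k, Real.exp (lam * Z i ω - (5/8)*lam^2 * sig i ω)
            ≤ ∏ _i ∈ Finset.Icc 1 k, (2:ℝ) := by
              apply Finset.prod_le_prod (fun i _ => (Real.exp_pos _).le)
              intro i hi
              rw [Finset.mem_Icc] at hi
              have hiN : i ∈ Finset.Icc 1 n := by rw [Finset.mem_Icc]; omega
              obtain ⟨hb, hs⟩ := hω i hiN
              have harg : lam * Z i ω - (5/8)*lam^2 * sig i ω ≤ 1/2 := by
                have h1 : lam * Z i ω ≤ 1/2 := by
                  calc lam * Z i ω ≤ |lam * Z i ω| := le_abs_self _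
                  _ = |lam| * |Z i ω| := abs_mul _ _
                  _ ≤ |lam| * K := mul_le_mul_of_nonneg_left hb (abs_nonneg _)
                  _ ≤ 1/2 := hlam
                nlinarith [sq_nonneg lam]
              calc Real.exp _ ≤ Real.exp (1/2) := Real.exp_le_exp.2 harg
              _ ≤ 2 := exp_half_le_two
        _ = 2^k := by rw [Finset.prod_const, Nat.card_Icc]; norm_num
      have hfac_int : ∀ k, k ≤ n → Integrable
          (fun ω => ∏ i ∈ Finset.Icc 1 k, Real.exp (lam * Z i ω - (5/8)*lam^2 * sig i ω)) μ := by
        intro k hk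
        refine Integrable.mono' (integrable_const ((2:ℝ)^k))
          (((hfac_meas k hk).mono (ℱ.le k)).aestronglyMeasurable) ?_
        filter_upwards [hfac_bdd k hk] with ω h
        rw [Real.norm_eq_abs, abs_of_nonneg (Finset.prod_nonneg fun i _ => (Real.exp_pos _).le)]
        exact h
      refine ⟨hfac_int n le_rfl, ?_⟩
      have key : ∀ k, k ≤ n →
          (∫ ω, (∏ i ∈ Finset.Icc 1 k,
              Real.exp (lam * Z i ω - (5/8)*lam^2 * sig i ω)) ∂μ) ≤ 1 := by
        intro k
        induction k with
        | zero =>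
          intro _
          rw [show Finset.Icc 1 0 = (∅ : Finset ℕ) from Finset.Icc_eq_empty (by omega)]
          simp
        | succ k ih =>
          intro hk1
          have hk : k ≤ n := le_trans (Nat.le_succ k) hk1
          have hk1N : (k+1) ∈ Finset.Icc 1 n := by rw [Finset.mem_Icc]; omega
          have hstepk := hstep (k+1) hk1N lam hlam
          simp only [Nat.add_sub_cancel] at hstepk
          have hsplit : ∀ ω, (∏ i ∈ Finset.Icc 1 (k+1),
                Real.exp (lam * Z i ω - (5/8)*lam^2 * sig i ω))
              = ((∏ i ∈ Finset.Icc 1 k, Real.exp (lam * Z i ω - (5/8)*lam^2 * sig i ω))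
                  * Real.exp (-((5/8)*lam^2 * sig (k+1) ω))) * Real.exp (lam * Z (k+1) ω) := by
            intro ω
            rw [← Finset.insert_Icc_right_eq_Icc_add_one (by omega), Finset.prod_insert (by simp)]
            rw [show lam * Z (k+1) ω - (5/8)*lam^2 * sig (k+1) ω
              = -((5/8)*lam^2 * sig (k+1) ω) + lam * Z (k+1) ω by ring, Real.exp_add]
            ring
          have hσmeas : StronglyMeasurable[ℱ k] (sig (k+1)) := by
            rw [hsigdef]
            exact stronglyMeasurable_condExp
          have hHmeas : StronglyMeasurable[ℱ k] (fun ω =>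
              (∏ i ∈ Finset.Icc 1 k, Real.exp (lam * Z i ω - (5/8)*lam^2 * sig i ω))
                * Real.exp (-((5/8)*lam^2 * sig (k+1) ω))) :=
            (hfac_meas k hk).mul
              (Real.continuous_exp.comp_stronglyMeasurable (hσmeas.const_mul _).neg)
          have hexpZ_int : Integrable (fun ω => Real.exp (lam * Z (k+1) ω)) μ := by
            refine Integrable.mono' (integrable_const (Real.exp (1/2))) ?_ ?_
            · exact (Real.continuous_exp.comp_stronglyMeasurable
                (((hadp (k+1) hk1N).mono (ℱ.le (k+1))).const_mul lam)).aestronglyMeasurable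
            · filter_upwards [hbdd (k+1) hk1N] with ω h
              rw [Real.norm_eq_abs, abs_of_pos (Real.exp_pos _)]
              apply Real.exp_le_exp.2
              calc lam * Z (k+1) ω ≤ |lam * Z (k+1) ω| := le_abs_self _
              _ = |lam| * |Z (k+1) ω| := abs_mul _ _
              _ ≤ |lam| * K := mul_le_mul_of_nonneg_left h (abs_nonneg _)
              _ ≤ 1/2 := hlam
          have hF1int : Integrable (fun ω =>
              ((∏ i ∈ Finset.Icc 1 k, Real.exp (lam * Z i ω - (5/8)*lam^2 * sig i ω))
                * Real.exp (-((5/8)*lam^2 * sig (k+1) ω))) * Real.exp (lam * Z (k+1) ω)) μ :=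
            (hfac_int (k+1) hk1).congr (Eventually.of_forall fun ω => (hsplit ω))
          have hHbdd : ∀ᵐ ω ∂μ, |(∏ i ∈ Finset.Icc 1 k,
                Real.exp (lam * Z i ω - (5/8)*lam^2 * sig i ω))
                * Real.exp (-((5/8)*lam^2 * sig (k+1) ω))| ≤ 2^k := by
            filter_upwards [hfac_bdd k hk, hae_all] with ω h1 h2
            have hFknn : (0:ℝ) ≤ ∏ i ∈ Finset.Icc 1 k,
                Real.exp (lam * Z i ω - (5/8)*lam^2 * sig i ω) :=
              Finset.prod_nonneg fun i _ => (Real.exp_pos _).le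
            have hs : 0 ≤ sig (k+1) ω := (h2 (k+1) hk1N).2
            rw [abs_of_nonneg (mul_nonneg hFknn (Real.exp_pos _).le)]
            have hexp1 : Real.exp (-((5/8)*lam^2 * sig (k+1) ω)) ≤ 1 :=
              Real.exp_le_one_iff.2 (by nlinarith [sq_nonneg lam])
            have hm := mul_le_mul_of_nonneg_left hexp1 hFknn
            rw [mul_one] at hm
            exact le_trans hm h1
          have hHcond_int : Integrable (fun ω =>
              ((∏ i ∈ Finset.Icc 1 k, Real.exp (lam * Z i ω - (5/8)*lam^2 * sig i ω))
                * Real.exp (-((5/8)*lam^2 * sig (k+1) ω)))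
              * (μ[fun ω' => Real.exp (lam * Z (k+1) ω')|ℱ k]) ω) μ := by
            have hcint : Integrable (μ[fun ω' => Real.exp (lam * Z (k+1) ω')|ℱ k]) μ :=
              integrable_condExp
            refine Integrable.mono' (hcint.norm.const_mul ((2:ℝ)^k)) ?_ ?_
            · exact ((hHmeas.mono (ℱ.le k)).mul
                (stronglyMeasurable_condExp.mono (ℱ.le k))).aestronglyMeasurable
            · filter_upwards [hHbdd] with ω h
              rw [Real.norm_eq_abs, abs_mul]
              exact mul_le_mul_of_nonneg_right h (abs_nonneg _)
          have hpull := condExp_mul_of_stronglyMeasurable_left (μ := μ) hHmeas hF1int hexpZ_int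
          calc ∫ ω, (∏ i ∈ Finset.Icc 1 (k+1),
                Real.exp (lam * Z i ω - (5/8)*lam^2 * sig i ω)) ∂μ
              = ∫ ω, ((∏ i ∈ Finset.Icc 1 k,
                  Real.exp (lam * Z i ω - (5/8)*lam^2 * sig i ω))
                  * Real.exp (-((5/8)*lam^2 * sig (k+1) ω))) * Real.exp (lam * Z (k+1) ω) ∂μ :=
                integral_congr_ae (Eventually.of_forall hsplit)
          _ = ∫ ω, (μ[fun ω' => ((∏ i ∈ Finset.Icc 1 k,
                  Real.exp (lam * Z i ω' - (5/8)*lam^2 * sig i ω'))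
                  * Real.exp (-((5/8)*lam^2 * sig (k+1) ω'))) * Real.exp (lam * Z (k+1) ω')|ℱ k]) ω ∂μ :=
                (integral_condExp (ℱ.le k)).symm
          _ = ∫ ω, ((∏ i ∈ Finset.Icc 1 k,
                  Real.exp (lam * Z i ω - (5/8)*lam^2 * sig i ω))
                  * Real.exp (-((5/8)*lam^2 * sig (k+1) ω)))
                  * (μ[fun ω' => Real.exp (lam * Z (k+1) ω')|ℱ k]) ω ∂μ := by
                apply integral_congr_ae
                filter_upwards [hpull] with ω h
                exact h
          _ ≤ ∫ ω, (∏ i ∈ Finset.Icc 1 k,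
                  Real.exp (lam * Z i ω - (5/8)*lam^2 * sig i ω)) ∂μ := by
                apply integral_mono_ae hHcond_int (hfac_int k hk)
                filter_upwards [hstepk] with ω h
                have hFknn : (0:ℝ) ≤ ∏ i ∈ Finset.Icc 1 k,
                    Real.exp (lam * Z i ω - (5/8)*lam^2 * sig i ω) :=
                  Finset.prod_nonneg fun i _ => (Real.exp_pos _).le
                have hHnn : (0:ℝ) ≤ (∏ i ∈ Finset.Icc 1 k,
                    Real.exp (lam * Z i ω - (5/8)*lam^2 * sig i ω))
                    * Real.exp (-((5/8)*lam^2 * sig (k+1) ω)) :=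
                  mul_nonneg hFknn (Real.exp_pos _).le
                calc _ * (μ[fun ω' => Real.exp (lam * Z (k+1) ω')|ℱ k]) ω
                    ≤ _ * Real.exp ((5/8)*lam^2 * sig (k+1) ω) :=
                      mul_le_mul_of_nonneg_left h hHnn
                _ = ∏ i ∈ Finset.Icc 1 k,
                    Real.exp (lam * Z i ω - (5/8)*lam^2 * sig i ω) := by
                      rw [mul_assoc, ← Real.exp_add, neg_add_cancel, Real.exp_zero, mul_one]
          _ ≤ 1 := ih hk
      exact key n le_rfl
    -- Step 3: Markov bound for each lambda
    have markov : ∀ lam : ℝ, |lam| * K ≤ 1/2 →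
        μ {ω | L ≤ lam * (∑ i ∈ Finset.Icc 1 n, Z i ω)
            - (5/8)*lam^2 * (∑ i ∈ Finset.Icc 1 n, sig i ω)}
          ≤ ENNReal.ofReal (δ/n) := by
      intro lam hlam
      obtain ⟨hFint, hFle⟩ := prodfacts lam hlam
      have hFval : ∀ ω, (∏ i ∈ Finset.Icc 1 n, Real.exp (lam * Z i ω - (5/8)*lam^2 * sig i ω))
          = Real.exp (lam * (∑ i ∈ Finset.Icc 1 n, Z i ω)
              - (5/8)*lam^2 * (∑ i ∈ Finset.Icc 1 n, sig i ω)) := by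
        intro ω
        rw [← Real.exp_sum]
        congr 1
        rw [Finset.sum_sub_distrib, ← Finset.mul_sum, ← Finset.mul_sum]
      have hset : {ω | L ≤ lam * (∑ i ∈ Finset.Icc 1 n, Z i ω)
            - (5/8)*lam^2 * (∑ i ∈ Finset.Icc 1 n, sig i ω)}
          = {ω | Real.exp L ≤ (∏ i ∈ Finset.Icc 1 n,
              Real.exp (lam * Z i ω - (5/8)*lam^2 * sig i ω))} := by
        ext ω
        simp only [Set.mem_setOf_eq]
        rw [hFval ω, Real.exp_le_exp]
      rw [hset]
      have hnn : 0 ≤ᵐ[μ] (fun ω => ∏ i ∈ Finset.Icc 1 n,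
          Real.exp (lam * Z i ω - (5/8)*lam^2 * sig i ω)) :=
        Eventually.of_forall fun ω => Finset.prod_nonneg fun i _ => (Real.exp_pos _).le
      have hmk := mul_meas_ge_le_integral_of_nonneg hnn hFint (Real.exp L)
      have hexpLpos := Real.exp_pos L
      have h4 : (Real.exp L)⁻¹ = δ/n := by
        rw [← Real.exp_neg, hLdef, Real.exp_neg, Real.exp_log hndpos, inv_div]
      have htoReal : (μ {ω | Real.exp L ≤ (∏ i ∈ Finset.Icc 1 n,
          Real.exp (lam * Z i ω - (5/8)*lam^2 * sig i ω))}).toReal ≤ δ/n := by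
        have h5 : Real.exp L * (μ {ω | Real.exp L ≤ (∏ i ∈ Finset.Icc 1 n,
            Real.exp (lam * Z i ω - (5/8)*lam^2 * sig i ω))}).toReal ≤ 1 := le_trans hmk hFle
        have h6 := (le_div_iff₀' hexpLpos).2 h5
        rwa [one_div, h4] at h6
      calc μ {ω | Real.exp L ≤ (∏ i ∈ Finset.Icc 1 n,
          Real.exp (lam * Z i ω - (5/8)*lam^2 * sig i ω))}
          = ENNReal.ofReal ((μ _).toReal) := (ENNReal.ofReal_toReal (measure_ne_top μ _)).symm
      _ ≤ ENNReal.ofReal (δ/n) := ENNReal.ofReal_le_ofReal htoReal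
    -- Step 4: union bound and bucket selection
    set m := Nat.log 4 n with hmdef
    set lamf : ℕ → ℝ := fun j => if j = 0 then 1/(2*K) else 1/(Real.sqrt 5 * (K * 2^(j-1)))
      with hlamfdef
    have hs5 : (2:ℝ) ≤ Real.sqrt 5 := by
      rw [show (2:ℝ) = Real.sqrt 4 by
        rw [show (4:ℝ) = 2^2 by norm_num, Real.sqrt_sq (by norm_num : (0:ℝ) ≤ 2)]]
      exact Real.sqrt_le_sqrt (by norm_num)
    have hs5pos : (0:ℝ) < Real.sqrt 5 := by linarith
    have hlamf_pos : ∀ j, 0 < lamf j := by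
      intro j
      rw [hlamfdef]
      dsimp only
      split
      · positivity
      · positivity
    have hlamf_bd : ∀ j, |lamf j| * K ≤ 1/2 := by
      intro j
      rw [abs_of_pos (hlamf_pos j), hlamfdef]
      dsimp only
      split
      · have : 1/(2*K)*K = 1/2 := by field_simp
        linarith
      · have h2j : (1:ℝ) ≤ 2^(j-1) := one_le_pow₀ (by norm_num)
        have e : 1/(Real.sqrt 5*(K*2^(j-1)))*K = 1/(Real.sqrt 5*2^(j-1)) := by
          field_simp
        rw [e, div_le_div_iff₀ (by positivity) (by norm_num)]
        nlinarith
    set T : Set Ω := ⋃ j ∈ Finset.range (m+1),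
        ({ω | L ≤ lamf j * (∑ i ∈ Finset.Icc 1 n, Z i ω)
            - (5/8)*(lamf j)^2 * (∑ i ∈ Finset.Icc 1 n, sig i ω)}
          ∪ {ω | L ≤ (-(lamf j)) * (∑ i ∈ Finset.Icc 1 n, Z i ω)
            - (5/8)*(-(lamf j))^2 * (∑ i ∈ Finset.Icc 1 n, sig i ω)}) with hTdef
    have hT : μ T ≤ ENNReal.ofReal δ := by
      have step1 : μ T ≤ ∑ j ∈ Finset.range (m+1), ENNReal.ofReal (2*(δ/n)) := by
        refine le_trans (measure_biUnion_finset_le _ _) (Finset.sum_le_sum ?_)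
        intro j _
        refine le_trans (measure_union_le _ _) ?_
        have hm1 := markov (lamf j) (hlamf_bd j)
        have hm2 := markov (-(lamf j)) (by rw [abs_neg]; exact hlamf_bd j)
        calc μ _ + μ _ ≤ ENNReal.ofReal (δ/n) + ENNReal.ofReal (δ/n) := add_le_add hm1 hm2
        _ = ENNReal.ofReal (2*(δ/n)) := by
              rw [← ENNReal.ofReal_add (by positivity) (by positivity)]
              ring_nf
      refine le_trans step1 ?_
      rw [Finset.sum_const, Finset.card_range, nsmul_eq_mul,
        ← ENNReal.ofReal_natCast (m+1), ← ENNReal.ofReal_mul (by positivity)]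
      apply ENNReal.ofReal_le_ofReal
      have hc : ((2*m+2 : ℕ):ℝ) ≤ (n:ℝ) := Nat.cast_le.2 (count_aux' hn)
      push_cast at hc ⊢
      have e : ((m:ℝ)+1)*(2*(δ/n)) = (2*m+2)*δ/n := by ring
      rw [e, div_le_iff₀ hnpos]
      nlinarith [mul_le_mul_of_nonneg_right hc hδ0.le]
    have hincl : ∀ᵐ ω ∂μ, ω ∉ T → ω ∈ S := by
      have hae_all2 : ∀ᵐ ω ∂μ, ∀ i ∈ (↑(Finset.Icc 1 n) : Set ℕ),
          0 ≤ sig i ω ∧ sig i ω ≤ K^2 := by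
        rw [ae_ball_iff (Finset.Icc 1 n).countable_toSet]
        intro i hi
        exact (hsig_nn i hi).and ((hsig_le i hi).mono fun ω h => h)
      filter_upwards [hae_all2] with ω hω hT'
      rw [hTdef] at hT'
      simp only [Set.mem_iUnion, Set.mem_union, Set.mem_setOf_eq, not_exists, not_or,
        not_le] at hT'
      rw [hSdef]
      simp only [Set.mem_setOf_eq]
      have hV0 : 0 ≤ ∑ i ∈ Finset.Icc 1 n, sig i ω :=
        Finset.sum_nonneg fun i hi => (hω i hi).1
      have hVle : (∑ i ∈ Finset.Icc 1 n, sig i ω) ≤ n * K^2 := by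
        calc (∑ i ∈ Finset.Icc 1 n, sig i ω) ≤ ∑ _i ∈ Finset.Icc 1 n, K^2 :=
          Finset.sum_le_sum fun i hi => (hω i hi).2
        _ = n * K^2 := by rw [Finset.sum_const, Nat.card_Icc, nsmul_eq_mul]; norm_num
      have hnotT : ∀ j, j ∈ Finset.range (m+1) →
          |∑ i ∈ Finset.Icc 1 n, Z i ω| < (5/8)*(lamf j)*(∑ i ∈ Finset.Icc 1 n, sig i ω)
            + L/(lamf j) := by
        intro j hj
        obtain ⟨h1, h2⟩ := hT' j hj
        have hpos := hlamf_pos j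
        have hLcancel : lamf j * (L / lamf j) = L := by
          rw [mul_comm, div_mul_cancel₀ _ hpos.ne']
        have e : lamf j * ((5/8)*(lamf j)*(∑ i ∈ Finset.Icc 1 n, sig i ω) + L/(lamf j))
            = (5/8)*(lamf j)^2*(∑ i ∈ Finset.Icc 1 n, sig i ω) + L := by
          rw [mul_add, hLcancel]
          ring
        rw [abs_lt]
        constructor
        · have hneg : (-(lamf j))^2 = (lamf j)^2 := by ring
          rw [hneg] at h2
          have h2'' : lamf j * (-(∑ i ∈ Finset.Icc 1 n, Z i ω))
              < lamf j * ((5/8)*(lamf j)*(∑ i ∈ Finset.Icc 1 n, sig i ω) + L/(lamf j)) := by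
            rw [e]
            nlinarith
          have := (mul_lt_mul_iff_right₀ hpos).1 h2''
          linarith
        · have h1'' : lamf j * (∑ i ∈ Finset.Icc 1 n, Z i ω)
              < lamf j * ((5/8)*(lamf j)*(∑ i ∈ Finset.Icc 1 n, sig i ω) + L/(lamf j)) := by
            rw [e]
            linarith
          exact (mul_lt_mul_iff_right₀ hpos).1 h1''
      have h3KL : (0:ℝ) ≤ 3*K*L := by positivity
      have hsqnn : (0:ℝ) ≤ 2*Real.sqrt ((∑ i ∈ Finset.Icc 1 n, sig i ω) * L) := by positivity
      rcases le_or_gt (∑ i ∈ Finset.Icc 1 n, sig i ω) (2*K^2*L) with hcase | hcase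
      · have h0 := hnotT 0 (Finset.mem_range.2 (by omega))
        have hl0 : lamf 0 = 1/(2*K) := by rw [hlamfdef]; simp
        rw [hl0] at h0
        have hb := bucket0_aux hKpos hL0.le hcase
        linarith
      · have hn4 : (n:ℝ) < 4^(m+1) := by
          have h := Nat.lt_pow_succ_log_self (by norm_num : 1 < 4) n
          rw [hmdef]
          exact_mod_cast h
        have hPm : (∑ i ∈ Finset.Icc 1 n, sig i ω) ≤ 2*K^2*L*4^m := by
          have h4m : (0:ℝ) < 4^m := by positivity
          have hps : (4:ℝ)^(m+1) = 4*4^m := by rw [pow_succ]; ring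
          rw [hps] at hn4
          nlinarith [hVle, mul_le_mul_of_nonneg_right hn4.le (sq_nonneg K),
            mul_nonneg (mul_nonneg (show (0:ℝ) ≤ 2*L-4 by linarith) h4m.le) (sq_nonneg K)]
        have hex : ∃ j, (∑ i ∈ Finset.Icc 1 n, sig i ω) ≤ 2*K^2*L*4^j := ⟨m, hPm⟩
        have hjspec : (∑ i ∈ Finset.Icc 1 n, sig i ω) ≤ 2*K^2*L*4^(Nat.find hex) :=
          Nat.find_spec hex
        set j := Nat.find hex with hjdef
        have hjm : j ≤ m := Nat.find_min' hex hPm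
        have hj0 : j ≠ 0 := by
          intro h0
          rw [h0] at hjspec
          simp only [pow_zero, mul_one] at hjspec
          linarith
        have hjprev := Nat.find_min hex (m := j-1) (by omega)
        push_neg at hjprev
        have hjmem := hnotT j (Finset.mem_range.2 (by omega))
        have hlj : lamf j = 1/(Real.sqrt 5 * (K * 2^(j-1))) := by
          rw [hlamfdef]
          simp [hj0]
        have h2j4 : ((2:ℝ)^(j-1))^2 = 4^(j-1) := by
          rw [← pow_mul, show (4:ℝ) = 2^2 by norm_num, ← pow_mul]
          ring_nf
        have hlsq : (lamf j)^2 = 1/(5*(K^2*4^(j-1))) := by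
          rw [hlj, div_pow, one_pow, mul_pow, mul_pow,
            Real.sq_sqrt (by norm_num : (0:ℝ) ≤ 5), h2j4]
        have h4pow : (0:ℝ) < 4^(j-1) := by positivity
        have hb1 : (2/5)*(L/(lamf j)^2) ≤ (∑ i ∈ Finset.Icc 1 n, sig i ω) := by
          rw [hlsq]
          have e1 : (2/5)*(L/(1/(5*(K^2*4^(j-1))))) = 2*K^2*L*4^(j-1) := by
            field_simp
          rw [e1]
          linarith
        have hb2 : (∑ i ∈ Finset.Icc 1 n, sig i ω) ≤ (8/5)*(L/(lamf j)^2) := by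
          rw [hlsq]
          have e48 : (4:ℝ)^j = 4*4^(j-1) := by
            conv_lhs => rw [show j = (j-1)+1 by omega]
            rw [pow_succ]
            ring
          have e1 : (8/5)*(L/(1/(5*(K^2*4^(j-1))))) = 2*K^2*L*(4*4^(j-1)) := by
            field_simp
            ring
          rw [e1, ← e48]
          exact hjspec
        have hbj := bucketj_aux (hlamf_pos j) hL0 hb1 hb2
        linarith
    have hSc : μ Sᶜ ≤ ENNReal.ofReal δ := by
      refine le_trans (measure_mono_ae ?_) hT
      filter_upwards [hincl] with ω h
      show ω ∈ Sᶜ → ω ∈ T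
      intro hSc
      by_contra hT'
      exact hSc (h hT')
    have h2 : (1:ENNReal) ≤ μ S + ENNReal.ofReal δ := by
      calc (1:ENNReal) = μ Set.univ := measure_univ.symm
      _ = μ (S ∪ Sᶜ) := by rw [Set.union_compl_self]
      _ ≤ μ S + μ Sᶜ := measure_union_le _ _
      _ ≤ μ S + ENNReal.ofReal δ := add_le_add le_rfl hSc
    have hofr : ENNReal.ofReal (1-δ) = 1 - ENNReal.ofReal δ := by
      rw [ENNReal.ofReal_sub 1 hδ0.le, ENNReal.ofReal_one]
    rw [hofr, tsub_le_iff_right]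
    exact h2
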